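/- Let A be a von Neumann hyperring and T ⊆ A a proper preorder. Then 1+T is a von Neumann subgroup of A. -/
import Mathlib


universe u v

/-- A multiring: a commutative monoid with a multivalued addition. -/
class Multiring (A : Type u) extends CommMonoid A, Zero A, Neg A where
  /-- the multivalued sum: `madd b c` is the set `b + c` -/
  madd : A → A → Set A
  madd_nonempty : ∀ a b : A, (madd a b).Nonempty
  madd_rev_left : ∀ a b c : A, a ∈ madd b c → c ∈ madd (-b) a
  madd_rev_right : ∀ a b c : A, a ∈ madd b c → b ∈ madd a (-c)
  mem_madd_zero : ∀ a b : A, a ∈ madd b 0 ↔ a = b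
  madd_assoc : ∀ a b c g x : A, g ∈ madd a b → x ∈ madd g c →
    ∃ h ∈ madd b c, x ∈ madd a h
  madd_comm : ∀ a b : A, madd a b = madd b a
  mul_zero' : ∀ a : A, a * 0 = 0
  madd_mul : ∀ a b c d : A, a ∈ madd b c → a * d ∈ madd (b * d) (c * d)

namespace Multiring

variable {A : Type u} [Multiring A]

/-- the iterated multivalued sum `x₁ + ⋯ + xₙ = {x₁} + (x₂ + ⋯ + xₙ)` of a list -/
def listSum : List A → Set A
  | [] => {(0 : A)}
  | a :: l => {x : A | ∃ y ∈ listSum l, x ∈ madd a y}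

/-- an ideal of a multiring: a nonempty subset with `I + I ⊆ I` and `A·I ⊆ I` -/
def IsIdeal (I : Set A) : Prop :=
  I.Nonempty ∧ (∀ a ∈ I, ∀ b ∈ I, madd a b ⊆ I) ∧ ∀ a : A, ∀ b ∈ I, a * b ∈ I

/-- a prime ideal: a proper ideal such that `a*b ∈ p → a ∈ p ∨ b ∈ p` -/
def IsPrimeIdeal (I : Set A) : Prop :=
  IsIdeal I ∧ (1 : A) ∉ I ∧ ∀ a b : A, a * b ∈ I → a ∈ I ∨ b ∈ I

/-- a maximal ideal: a proper ideal maximal among proper ideals -/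
def IsMaximalIdeal (I : Set A) : Prop :=
  IsIdeal I ∧ (1 : A) ∉ I ∧ ∀ J : Set A, IsIdeal J → (1 : A) ∉ J → I ⊆ J → J = I

/-- a multiplicative subset -/
def IsMultiplicative (S : Set A) : Prop :=
  (1 : A) ∈ S ∧ ∀ s ∈ S, ∀ t ∈ S, s * t ∈ S

/-- a hyperring: a multiring with the strong distributivity property -/
def IsHyperring (A : Type u) [Multiring A] : Prop :=
  ∀ x b c d : A, x ∈ madd (b * d) (c * d) → ∃ a ∈ madd b c, x = a * d

/-- a von Neumann (regular) hyperring -/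
def IsVonNeumann (A : Type u) [Multiring A] : Prop :=
  IsHyperring A ∧ ∀ a : A, ∃ b : A, a = a * a * b

/-- the equivalence modulo an ideal `I`: `a ∼_I b` iff `(a + (-b)) ∩ I ≠ ∅`;
this is equality of classes in the quotient multiring `A/I`. -/
def simI (I : Set A) (a b : A) : Prop := ∃ x ∈ madd a (-b), x ∈ I

/-- membership of classes in the multivalued sum of the quotient `A/I`:
`[a] ∈ [b] + [c]` iff `a ∈ b + c + i` for some `i ∈ I`. -/
def qmemI (I : Set A) (a b c : A) : Prop := ∃ i ∈ I, ∃ w ∈ madd c i, a ∈ madd b w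

/-- representatives `x` with `[x] ∈ [c₁] + ⋯ + [cₙ]` in the quotient `A/I` -/
def qlistSumI (I : Set A) : List A → Set A
  | [] => {x : A | simI I x 0}
  | c :: l => {x : A | ∃ y ∈ qlistSumI I l, qmemI I x c y}

/-- the quotient multiring `A/I` is a multifield: `1 ≠ 0` and every nonzero
element is weak-invertible -/
def QuotIsMultifield (I : Set A) : Prop :=
  ¬ simI I 1 0 ∧
    ∀ a : A, ¬ simI I a 0 →
      ∃ l : List A, l ≠ [] ∧ (1 : A) ∈ qlistSumI I (l.map fun b => a * b)

/-- the quotient multiring `A/I` is a hyperfield: `1 ≠ 0` and every nonzero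
element is invertible -/
def QuotIsHyperfield (I : Set A) : Prop :=
  ¬ simI I 1 0 ∧ ∀ a : A, ¬ simI I a 0 → ∃ b : A, simI I (a * b) 1

/-- the Marshall equivalence associated to a multiplicative set `S`:
`a ∼_S b` iff `as = bt` for some `s,t ∈ S`; this is equality of classes in the
Marshall quotient `A/ₘS`. -/
def simM (S : Set A) (a b : A) : Prop := ∃ s ∈ S, ∃ t ∈ S, a * s = b * t

/-- `S̄ = {x : xs ∈ S for some s ∈ S}` -/
def mbar (S : Set A) : Set A := {x : A | ∃ s ∈ S, x * s ∈ S}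

/-- membership of classes in the multivalued sum of the Marshall quotient `A/ₘS`:
`[a] ∈ [b] + [c]` iff `as ∈ bt + cu` for some `s,t,u ∈ S`. -/
def qmemM (S : Set A) (a b c : A) : Prop :=
  ∃ s ∈ S, ∃ t ∈ S, ∃ u ∈ S, a * s ∈ madd (b * t) (c * u)

/-- representatives `x` with `[x] ∈ [c₁] + ⋯ + [cₙ]` in the Marshall quotient `A/ₘS` -/
def qlistSumM (S : Set A) : List A → Set A
  | [] => {x : A | simM S x 0}
  | c :: l => {x : A | ∃ y ∈ qlistSumM S l, qmemM S x c y}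

/-- the multivalued sum of the hyperfield `3 = {-1, 0, 1}` -/
def signAdd : SignType → SignType → Set SignType
  | SignType.zero, x => {x}
  | x, SignType.zero => {x}
  | SignType.pos, SignType.pos => {SignType.pos}
  | SignType.neg, SignType.neg => {SignType.neg}
  | _, _ => Set.univ

/-- a multiring morphism `A → 3`, i.e. an order of `A` -/
def IsSignMorphism (σ : A → SignType) : Prop :=
  (∀ a b c : A, a ∈ madd b c → σ a ∈ signAdd (σ b) (σ c)) ∧
  (∀ a b : A, σ (a * b) = σ a * σ b) ∧
  (∀ a : A, σ (-a) = -(σ a)) ∧ σ 0 = 0 ∧ σ 1 = 1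

/-- a prime cone of a multiring -/
def IsPrimeCone (P : Set A) : Prop :=
  (∀ a : A, a * a ∈ P) ∧ (∀ a ∈ P, ∀ b ∈ P, madd a b ⊆ P) ∧
  (∀ a ∈ P, ∀ b ∈ P, a * b ∈ P) ∧ (∀ a : A, a ∈ P ∨ -a ∈ P) ∧
  IsPrimeIdeal {x : A | x ∈ P ∧ -x ∈ P}

open Classical in
/-- the map `σ_P : A → 3` associated to a prime cone `P` -/
noncomputable def sigmaOf (P : Set A) (a : A) : SignType :=
  if a ∈ P ∧ -a ∈ P then 0 else if a ∈ P then 1 else -1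

/-- `ΣA²`: the set of elements lying in some finite sum of squares -/
def SumsOfSquares (A : Type u) [Multiring A] : Set A :=
  {x : A | ∃ l : List A, l ≠ [] ∧ x ∈ listSum (l.map fun a => a * a)}

/-- a multiring is semi-real when `-1 ∉ ΣA²` -/
def IsSemiReal (A : Type u) [Multiring A] : Prop := (-(1 : A)) ∉ SumsOfSquares A

/-- a real reduced multiring -/
def IsRealReduced (A : Type u) [Multiring A] : Prop :=
  IsSemiReal A ∧ (∀ a : A, a * a * a = a) ∧
  (∀ a b : A, madd a (a * b * b) = {a}) ∧
  (∀ a b : A, ∃ c : A, madd (a * a) (b * b) = {c})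

/-- a hyperfield: a hyperring with `1 ≠ 0` and all nonzero elements invertible -/
def IsHyperfield (A : Type u) [Multiring A] : Prop :=
  IsHyperring A ∧ (1 : A) ≠ 0 ∧ ∀ a : A, a ≠ 0 → ∃ b : A, a * b = 1

/-- a morphism of multirings -/
def IsMorphism {B : Type v} [Multiring B] (f : A → B) : Prop :=
  (∀ a b c : A, a ∈ madd b c → f a ∈ madd (f b) (f c)) ∧
  (∀ a b : A, f (a * b) = f a * f b) ∧
  (∀ a : A, f (-a) = -(f a)) ∧ f 0 = 0 ∧ f 1 = 1

/-- the radical `√α = {x : xⁿ ∈ α for some n ≥ 1}` of an ideal -/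
def radical (α : Set A) : Set A := {x : A | ∃ n : ℕ, 1 ≤ n ∧ x ^ n ∈ α}

/-- the ideal `(x) = ∪ {t₁x + ⋯ + tₙx}` generated by `x` -/
def genIdeal (x : A) : Set A :=
  {y : A | ∃ l : List A, l ≠ [] ∧ y ∈ listSum (l.map fun t => t * x)}

/-- `S_a = {x : aⁿ ∈ (x) for some n ≥ 0}` -/
def Sgen (a : A) : Set A := {x : A | ∃ n : ℕ, a ^ n ∈ genIdeal x}

/-- `a` is weak-invertible when `1 ∈ ab₁ + ⋯ + abₙ` for some `b₁,…,bₙ` -/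
def WeakInvertible (a : A) : Prop :=
  ∃ l : List A, l ≠ [] ∧ (1 : A) ∈ listSum (l.map fun b => a * b)

/-- the prime spectrum of a multiring -/
abbrev Spec (A : Type u) [Multiring A] : Type u := {p : Set A // IsPrimeIdeal p}

/-- the spectral topology on `spec A`, generated by the sets `D(a) = {p : a ∉ p}` -/
instance : TopologicalSpace (Spec A) :=
  TopologicalSpace.generateFrom {U : Set (Spec A) | ∃ a : A, U = {p : Spec A | a ∉ p.1}}

/-- the Marshall quotient `A/ₘS` is a real reduced multiring (expressed on
representatives) -/
def QuotIsRealReduced (S : Set A) : Prop :=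
  (∀ l : List A, l ≠ [] → (-(1 : A)) ∉ qlistSumM S (l.map fun a => a * a)) ∧
  (∀ a : A, simM S (a * a * a) a) ∧
  (∀ a b x : A, qmemM S x a (a * b * b) ↔ simM S x a) ∧
  (∀ a b : A, ∃ c : A, ∀ x : A, qmemM S x (a * a) (b * b) ↔ simM S x c)

/-- the Marshall quotient `A/ₘS` is a geometric von Neumann hyperring
(expressed on representatives): it is a hyperring, von Neumann regular, and
`e + eᶜ = {1}` for every idempotent `e` -/
def QuotGeometricVN (S : Set A) : Prop :=
  (∀ x b c d : A, qmemM S x (b * d) (c * d) → ∃ a : A, qmemM S a b c ∧ simM S x (a * d)) ∧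
  (∀ a : A, ∃ b : A, simM S a (a * a * b)) ∧
  (∀ e x : A, simM S (e * e) e → qmemM S x 1 (-e) → simM S (e * x) 0 →
    ∀ y : A, qmemM S y e x ↔ simM S y 1)

/-- a von Neumann subgroup: a multiplicative set such that for every idempotent
`a` (with complement `aᶜ`) and every `x ∈ D_S(a, aᶜ)` there is `s ∈ S` with `xs ∈ S` -/
def IsVNSubgroup (S : Set A) : Prop :=
  IsMultiplicative S ∧
    ∀ a x ac : A, a * a = a → ac ∈ madd 1 (-a) → a * ac = 0 →
      (∃ u ∈ S, ∃ v ∈ S, ∃ w ∈ S, x * u ∈ madd (a * v) (ac * w)) →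
      ∃ s ∈ S, x * s ∈ S

/-- a preorder of a multiring -/
def IsPreorderSet (T : Set A) : Prop :=
  (∀ a : A, a * a ∈ T) ∧ (∀ a ∈ T, ∀ b ∈ T, a * b ∈ T) ∧ (∀ a ∈ T, ∀ b ∈ T, madd a b ⊆ T)

/-- `1 + T = ∪ {1 + t : t ∈ T}` -/
def oneAdd (T : Set A) : Set A := {x : A | ∃ t ∈ T, x ∈ madd 1 t}

/-- `ΣḞ²`: elements lying in some finite sum of squares of nonzero elements -/
def sumSqNonzero (A : Type u) [Multiring A] : Set A :=
  {x : A | ∃ l : List A, l ≠ [] ∧ (∀ a ∈ l, a ≠ 0) ∧ x ∈ listSum (l.map fun a => a * a)}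

end Multiring


section Aux
open Multiring
variable {A : Type u} [Multiring A]

theorem my_zero_mem_madd_neg (a : A) : (0 : A) ∈ Multiring.madd (-a) a :=
  Multiring.madd_rev_left a a 0 ((Multiring.mem_madd_zero a a).mpr rfl)

theorem my_zero_mul (d : A) : (0 : A) * d = 0 := by
  rw [mul_comm]; exact Multiring.mul_zero' d

theorem my_neg_mul (a d : A) : (-a) * d = -(a * d) := by
  have h0 : (0 : A) ∈ Multiring.madd ((-a) * d) (a * d) := by
    have := Multiring.madd_mul 0 (-a) a d (my_zero_mem_madd_neg a)
    rwa [my_zero_mul] at this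
  have h1 := Multiring.madd_rev_right 0 ((-a) * d) (a * d) h0
  rw [Multiring.madd_comm] at h1
  exact (Multiring.mem_madd_zero _ _).mp h1

theorem my_neg_neg (a : A) : -(-a) = a := by
  have h1 := Multiring.madd_rev_left 0 (-a) a (my_zero_mem_madd_neg a)
  exact ((Multiring.mem_madd_zero a (-(-a))).mp h1).symm

theorem my_neg_zero : -(0 : A) = 0 := by
  have h0 : (0 : A) ∈ Multiring.madd (0 : A) 0 := (Multiring.mem_madd_zero 0 0).mpr rfl
  have h1 := Multiring.madd_rev_left 0 0 0 h0
  exact ((Multiring.mem_madd_zero (0 : A) (-0)).mp h1).symm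

end Aux

/-- If `A` is a von Neumann hyperring and `T` a proper preorder, then `1 + T`
is a von Neumann subgroup of `A`. -/
theorem oneAdd_preorder_isVNSubgroup {A : Type u} [Multiring A]
    (hA : Multiring.IsVonNeumann A) (T : Set A)
    (hT : Multiring.IsPreorderSet T) (hproper : (-(1 : A)) ∉ T) :
    Multiring.IsVNSubgroup (Multiring.oneAdd T) := by
  classical
  obtain ⟨hhyper, -⟩ := hA
  obtain ⟨hsq, hmulT, haddT⟩ := hT
  have h0T : (0 : A) ∈ T := by have := hsq 0; rwa [Multiring.mul_zero' 0] at this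
  have h1T : (1 : A) ∈ T := by have := hsq 1; rwa [one_mul] at this
  have hS1 : (1 : A) ∈ Multiring.oneAdd T :=
    ⟨0, h0T, (Multiring.mem_madd_zero 1 1).mpr rfl⟩
  -- T absorbs multiplication by elements of S
  have hTS : ∀ t ∈ T, ∀ s ∈ Multiring.oneAdd T, t * s ∈ T := by
    rintro t ht s ⟨q, hq, hs⟩
    have h := Multiring.madd_mul s 1 q t hs
    rw [one_mul] at h
    have : t * s = s * t := mul_comm _ _
    rw [this]
    exact haddT t ht (q * t) (hmulT q hq t ht) h
  -- S is multiplicatively closed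
  have hSmul : ∀ s ∈ Multiring.oneAdd T, ∀ s' ∈ Multiring.oneAdd T,
      s * s' ∈ Multiring.oneAdd T := by
    rintro s ⟨t, ht, hs⟩ s' ⟨t', ht', hs'⟩
    have h1 := Multiring.madd_mul s 1 t s' hs
    rw [one_mul] at h1
    obtain ⟨h, hh, hss'⟩ := Multiring.madd_assoc 1 t' (t * s') s' (s * s') hs' h1
    have hts' : t * s' ∈ T := hTS t ht s' ⟨t', ht', hs'⟩
    exact ⟨h, haddT t' ht' (t * s') hts' hh, hss'⟩
  refine ⟨⟨hS1, hSmul⟩, ?_⟩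
  rintro a x ac haa hac hacz ⟨u, hu, v, hv, w, hw, hxu⟩
  -- a and ac are idempotent, hence in T
  have haT : a ∈ T := by have := hsq a; rwa [haa] at this
  have hacid : ac * ac = ac := by
    have h := Multiring.madd_mul ac 1 (-a) ac hac
    rw [one_mul, my_neg_mul, hacz, my_neg_zero] at h
    exact (Multiring.mem_madd_zero _ _).mp h
  have hacT : ac ∈ T := by have := hsq ac; rwa [hacid] at this
  -- 1 ∈ a + ac
  have h1aac : (1 : A) ∈ Multiring.madd a ac := by
    have h := Multiring.madd_rev_right ac 1 (-a) hac
    rw [my_neg_neg, Multiring.madd_comm] at h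
    exact h
  -- products with a, ac are in T
  have haS : ∀ s ∈ Multiring.oneAdd T, a * s ∈ T := fun s hs => by
    have := hTS a haT s hs; exact this
  have hacS : ∀ s ∈ Multiring.oneAdd T, ac * s ∈ T := fun s hs => hTS ac hacT s hs
  set z := x * u with hzdef
  have hz : z ∈ Multiring.madd (a * v) (ac * w) := hxu
  have hzT : z ∈ T := haddT (a * v) (haS v hv) (ac * w) (hacS w hw) hz
  -- z * a = a * v
  have hza : z * a = a * v := by
    have h := Multiring.madd_mul z (a * v) (ac * w) a hz
    have e1 : a * v * a = a * v := by
      rw [mul_comm (a * v) a, ← mul_assoc, haa]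
    have e2 : ac * w * a = 0 := by
      rw [mul_comm ac w, mul_assoc, mul_comm ac a, hacz, Multiring.mul_zero']
    rw [e1, e2] at h
    exact (Multiring.mem_madd_zero _ _).mp h
  -- z * ac = ac * w
  have hzac : z * ac = ac * w := by
    have h := Multiring.madd_mul z (a * v) (ac * w) ac hz
    have e1 : a * v * ac = 0 := by
      rw [mul_comm a v, mul_assoc, hacz, Multiring.mul_zero']
    have e2 : ac * w * ac = ac * w := by
      rw [mul_comm ac w, mul_assoc, hacid, mul_comm w ac]
    rw [e1, e2] at h
    rw [Multiring.madd_comm] at h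
    exact (Multiring.mem_madd_zero _ _).mp h
  -- v*w ∈ (a*w)*z + (ac*v)*z
  have hkey : v * w ∈ Multiring.madd ((a * w) * z) ((ac * v) * z) := by
    have h := Multiring.madd_mul 1 a ac (v * w) h1aac
    rw [one_mul] at h
    have e1 : a * (v * w) = (a * w) * z := by
      rw [← mul_assoc, ← hza]; ac_rfl
    have e2 : ac * (v * w) = (ac * v) * z := by
      rw [mul_comm v w, ← mul_assoc, ← hzac]; ac_rfl
    rw [e1, e2] at h
    exact h
  obtain ⟨p, hp, hpz⟩ := hhyper (v * w) (a * w) (ac * v) z hkey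
  have hpT : p ∈ T := haddT (a * w) (haS w hw) (ac * v) (hacS v hv) hp
  have hvwS : v * w ∈ Multiring.oneAdd T := hSmul v hv w hw
  obtain ⟨t3, ht3, hvw⟩ := hvwS
  obtain ⟨s0, hs0⟩ := Multiring.madd_nonempty (1 : A) p
  have hs0S : s0 ∈ Multiring.oneAdd T := ⟨p, hpT, hs0⟩
  refine ⟨u * s0, hSmul u hu s0 hs0S, ?_⟩
  have hxs : x * (u * s0) = z * s0 := by rw [hzdef, mul_assoc]
  rw [hxs]
  have h := Multiring.madd_mul s0 1 p z hs0
  rw [one_mul] at h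
  have hpz' : p * z = v * w := hpz.symm
  rw [hpz'] at h
  -- z * s0 ∈ z + v*w ; s0 * z = z * s0
  rw [mul_comm s0 z] at h
  rw [Multiring.madd_comm] at h
  -- now z * s0 ∈ madd (v*w) z with v*w ∈ madd 1 t3
  obtain ⟨hh, hhmem, hfin⟩ := Multiring.madd_assoc 1 t3 z (v * w) (z * s0) hvw h
  exact ⟨hh, haddT t3 ht3 z hzT hhmem, hfin⟩
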